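/- For n ≥ 1, the partitions of [n] avoiding both 13/2 and 12/3 are exactly the partitions of the form 1/2/…/(k−1)/{k, k+1, …, n} for 1 ≤ k ≤ n, and consequently SB_n(13/2, 12/3; q,t) = Σ_{k=1}^{n} q^{n-k} t^{k}. -/

import Mathlib

open scoped Classical
noncomputable section

/-- A set partition of `[n]` is modeled as a setoid (equivalence relation) on `Fin n`. -/
abbrev SetPartition (n : ℕ) := Setoid (Fin n)

/-- Pattern containment for set partitions: `P` contains `Q` if there is a strictly
increasing map along which the block structure of `Q` is induced by that of `P`. -/
def SPContains {n k : ℕ} (P : SetPartition n) (Q : SetPartition k) : Prop :=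
  ∃ f : Fin k → Fin n, StrictMono f ∧ ∀ a b : Fin k, Q.r a b ↔ P.r (f a) (f b)

def SPAvoids {n k : ℕ} (P : SetPartition n) (Q : SetPartition k) : Prop :=
  ¬ SPContains P Q

noncomputable instance instFintypeSetoidFin (n : ℕ) : Fintype (SetPartition n) :=
  Fintype.ofInjective (fun P => P.r) fun P Q h => Setoid.ext fun a b => by simp only at h; rw [show P.r = Q.r from h]

/-- The (0-based) minimum of the block containing `i`. -/
def blockMin {n : ℕ} (P : SetPartition n) (i : Fin n) : ℕ :=
  sInf {j : ℕ | ∃ h : j < n, P.r ⟨j, h⟩ i}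

/-- The (0-based) maximum of the block containing `i`. -/
def blockMax {n : ℕ} (P : SetPartition n) (i : Fin n) : ℕ :=
  sSup {j : ℕ | ∃ h : j < n, P.r ⟨j, h⟩ i}

/-- The spread statistic: the sum over blocks of (max − min). -/
def spread {n : ℕ} (P : SetPartition n) : ℕ :=
  ∑ i ∈ Finset.univ.filter (fun i : Fin n => blockMin P i = (i : ℕ)),
    (blockMax P i - (i : ℕ))

/-- The number of blocks. -/
def blockNum {n : ℕ} (P : SetPartition n) : ℕ :=
  (Finset.univ.image (fun i : Fin n => Quotient.mk P i)).card

/-- The restricted growth function of a partition: `rgf P i` is the index (starting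
from 1) of the block of `i` when the blocks are listed in order of their minima. -/
def rgf {n : ℕ} (P : SetPartition n) (i : Fin n) : ℕ :=
  (Finset.univ.filter (fun j : Fin n => blockMin P j = (j : ℕ) ∧ (j : ℕ) ≤ blockMin P i)).card

/-- `w : Fin n → ℕ` is a restricted growth function. -/
def IsRGF {n : ℕ} (w : Fin n → ℕ) : Prop :=
  ∀ i : Fin n, 1 ≤ w i ∧ w i ≤ (Finset.univ.filter (fun j : Fin n => j < i)).sup w + 1

/-- patterns -/
def p123 : SetPartition 3 := Setoid.ker ![0, 0, 0]
def p1_2_3 : SetPartition 3 := Setoid.ker ![0, 1, 2]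
def p13_2 : SetPartition 3 := Setoid.ker ![0, 1, 0]
def p12_3 : SetPartition 3 := Setoid.ker ![0, 0, 1]
def p1_23 : SetPartition 3 := Setoid.ker ![0, 1, 1]
def p13_24 : SetPartition 4 := Setoid.ker ![0, 1, 0, 1]


/-- The joint generating function of spread and block over partitions of `[n]`
avoiding both patterns `Q₁` and `Q₂`. -/
def SB2 {k₁ k₂ : ℕ} (n : ℕ) (Q₁ : SetPartition k₁) (Q₂ : SetPartition k₂) (q t : ℚ) : ℚ :=
  ∑ P ∈ Finset.univ.filter
      (fun P : SetPartition n => SPAvoids P Q₁ ∧ SPAvoids P Q₂),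
    q ^ spread P * t ^ blockNum P

def Pk (n k : ℕ) : SetPartition n := Setoid.ker (fun i : Fin n => min (i : ℕ) (k - 1))

lemma Pk_rel {n k : ℕ} (i j : Fin n) :
    (Pk n k).r i j ↔ min (i : ℕ) (k-1) = min (j : ℕ) (k-1) := Iff.rfl

lemma strictMono3 {n : ℕ} {a b c : Fin n} (hab : a < b) (hbc : b < c) :
    StrictMono ![a, b, c] := by
  intro x y h
  fin_cases x <;> fin_cases y <;>
    first
      | exact absurd h (by decide)
      | exact hab
      | exact hbc
      | exact hab.trans hbc

lemma contains_13_2 {n : ℕ} (P : SetPartition n) {a b c : Fin n} (hab : a < b) (hbc : b < c)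
    (hac : P.r a c) (hnab : ¬ P.r a b) : SPContains P p13_2 := by
  have hnbc : ¬ P.r b c := fun h => hnab (P.trans' hac (P.symm' h))
  refine ⟨![a, b, c], strictMono3 hab hbc, ?_⟩
  intro u v
  fin_cases u <;> fin_cases v <;> constructor <;> intro h
  · exact P.refl a
  · rfl
  · exact absurd (show ((0:ℕ) = 1) from h) (by omega)
  · exact absurd h hnab
  · exact hac
  · rfl
  · exact absurd (show ((1:ℕ) = 0) from h) (by omega)
  · exact absurd h (fun hh => hnab (P.symm' hh))
  · exact P.refl b
  · rfl
  · exact absurd (show ((1:ℕ) = 0) from h) (by omega)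
  · exact absurd h hnbc
  · exact P.symm' hac
  · rfl
  · exact absurd (show ((0:ℕ) = 1) from h) (by omega)
  · exact absurd h (fun hh => hnbc (P.symm' hh))
  · exact P.refl c
  · rfl

lemma contains_12_3 {n : ℕ} (P : SetPartition n) {a b c : Fin n} (hab : a < b) (hbc : b < c)
    (hrab : P.r a b) (hnac : ¬ P.r a c) : SPContains P p12_3 := by
  have hnbc : ¬ P.r b c := fun h => hnac (P.trans' hrab h)
  refine ⟨![a, b, c], strictMono3 hab hbc, ?_⟩
  intro u v
  fin_cases u <;> fin_cases v <;> constructor <;> intro h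
  · exact P.refl a
  · rfl
  · exact hrab
  · rfl
  · exact absurd (show ((0:ℕ) = 1) from h) (by omega)
  · exact absurd h hnac
  · exact P.symm' hrab
  · rfl
  · exact P.refl b
  · rfl
  · exact absurd (show ((0:ℕ) = 1) from h) (by omega)
  · exact absurd h hnbc
  · exact absurd (show ((1:ℕ) = 0) from h) (by omega)
  · exact absurd h (fun hh => hnac (P.symm' hh))
  · exact absurd (show ((1:ℕ) = 0) from h) (by omega)
  · exact absurd h (fun hh => hnbc (P.symm' hh))
  · exact P.refl c
  · rfl


lemma Pk_avoids (n k : ℕ) : SPAvoids (Pk n k) p13_2 ∧ SPAvoids (Pk n k) p12_3 := by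
  constructor
  · rintro ⟨f, hf, h⟩
    have l01 : (f 0 : ℕ) < f 1 := hf (by decide)
    have l12 : (f 1 : ℕ) < f 2 := hf (by decide)
    have h02 : min (f 0 : ℕ) (k-1) = min (f 2 : ℕ) (k-1) := (h 0 2).mp rfl
    have h01 : ¬ min (f 0 : ℕ) (k-1) = min (f 1 : ℕ) (k-1) := fun hh => by
      have : (0:ℕ) = 1 := (h 0 1).mpr hh
      omega
    omega
  · rintro ⟨f, hf, h⟩
    have l01 : (f 0 : ℕ) < f 1 := hf (by decide)
    have l12 : (f 1 : ℕ) < f 2 := hf (by decide)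
    have h01 : min (f 0 : ℕ) (k-1) = min (f 1 : ℕ) (k-1) := (h 0 1).mp rfl
    have h02 : ¬ min (f 0 : ℕ) (k-1) = min (f 2 : ℕ) (k-1) := fun hh => by
      have : (0:ℕ) = 1 := (h 0 2).mpr hh
      omega
    omega

lemma mem_blockSet_self {n : ℕ} (P : SetPartition n) (i : Fin n) :
    (i : ℕ) ∈ {j : ℕ | ∃ h : j < n, P.r ⟨j, h⟩ i} := ⟨i.isLt, P.refl i⟩

lemma blockMin_le {n : ℕ} (P : SetPartition n) (i : Fin n) : blockMin P i ≤ (i : ℕ) :=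
  Nat.sInf_le (mem_blockSet_self P i)

lemma blockMin_mem {n : ℕ} (P : SetPartition n) (i : Fin n) :
    ∃ h : blockMin P i < n, P.r ⟨blockMin P i, h⟩ i :=
  Nat.sInf_mem ⟨(i : ℕ), mem_blockSet_self P i⟩

lemma structure_of_avoids {n : ℕ} (hn : 1 ≤ n) (P : SetPartition n)
    (h1 : SPAvoids P p13_2) (h2 : SPAvoids P p12_3) :
    ∃ k : ℕ, 1 ≤ k ∧ k ≤ n ∧ P = Pk n k := by
  set last : Fin n := ⟨n - 1, by omega⟩ with hlast
  set m : ℕ := blockMin P last with hm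
  obtain ⟨hmlt, hmrel⟩ := blockMin_mem P last
  have hmle : m ≤ n - 1 := blockMin_le P last
  -- anything ≥ m is related to last
  have stepA : ∀ i : Fin n, m ≤ (i : ℕ) → P.r i last := by
    intro i hi
    rcases eq_or_lt_of_le hi with he | hlt
    · have : i = ⟨m, hmlt⟩ := Fin.ext he.symm
      rw [this]; exact hmrel
    · rcases eq_or_lt_of_le (Nat.le_sub_one_of_lt i.isLt) with he | hlt2
      · have : i = last := Fin.ext he
        rw [this]
      · by_contra hni
        have hnmi : ¬ P.r ⟨m, hmlt⟩ i := fun hh => hni (P.trans' (P.symm' hh) hmrel)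
        exact h1 (contains_13_2 P (show (⟨m, hmlt⟩ : Fin n) < i from hlt)
          (show i < last from hlt2) hmrel hnmi)
  -- related pairs are ≥ m
  have stepB : ∀ i j : Fin n, i < j → P.r i j → m ≤ (i : ℕ) := by
    intro i j hij hr
    have hil : P.r i last := by
      rcases eq_or_lt_of_le (Nat.le_sub_one_of_lt j.isLt) with he | hlt2
      · have : j = last := Fin.ext he
        rw [← this]; exact hr
      · by_contra hni
        exact h2 (contains_12_3 P hij (show j < last from hlt2) hr hni)
    exact Nat.sInf_le ⟨i.isLt, by
      have : (⟨(i:ℕ), i.isLt⟩ : Fin n) = i := Fin.ext rfl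
      rw [this]; exact hil⟩
  refine ⟨m + 1, by omega, by omega, ?_⟩
  apply Setoid.ext
  intro a b
  have hk1 : m + 1 - 1 = m := by omega
  rw [show (Pk n (m+1)).r a b ↔ min (a:ℕ) m = min (b:ℕ) m by rw [Pk_rel, hk1]]
  constructor
  · intro hab
    rcases lt_trichotomy a b with hlt | heq | hgt
    · have ha := stepB a b hlt hab
      have hb : m ≤ (b:ℕ) := le_of_lt (lt_of_le_of_lt ha hlt)
      omega
    · rw [heq]
    · have hb := stepB b a hgt (P.symm' hab)
      have ha : m ≤ (a:ℕ) := le_of_lt (lt_of_le_of_lt hb hgt)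
      omega
  · intro hmin
    rcases Nat.lt_or_ge (a : ℕ) m with ha | ha
    · have : (a : ℕ) = (b : ℕ) := by omega
      rw [Fin.ext this]
    · have hb : m ≤ (b : ℕ) := by omega
      exact P.trans' (stepA a ha) (P.symm' (stepA b hb))


lemma blockMin_Pk {n k : ℕ} (hk1 : 1 ≤ k) (hkn : k ≤ n) (i : Fin n) :
    blockMin (Pk n k) i = min (i : ℕ) (k - 1) := by
  apply IsLeast.csInf_eq
  constructor
  · refine ⟨by omega, ?_⟩
    show min (min (i : ℕ) (k-1)) (k-1) = min (i : ℕ) (k-1)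
    omega
  · rintro j ⟨hj, hrel⟩
    have : min (j : ℕ) (k-1) = min (i : ℕ) (k-1) := hrel
    omega

lemma blockMax_Pk {n k : ℕ} (hk1 : 1 ≤ k) (hkn : k ≤ n) (i : Fin n) :
    blockMax (Pk n k) i = if (i : ℕ) < k - 1 then (i : ℕ) else n - 1 := by
  apply IsGreatest.csSup_eq
  constructor
  · split
    · refine ⟨i.isLt, ?_⟩
      show min (i : ℕ) (k-1) = min (i : ℕ) (k-1)
      rfl
    · refine ⟨by omega, ?_⟩
      show min (n - 1 : ℕ) (k-1) = min (i : ℕ) (k-1)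
      have := i.isLt
      omega
  · rintro j ⟨hj, hrel⟩
    have hr : min (j : ℕ) (k-1) = min (i : ℕ) (k-1) := hrel
    have := i.isLt
    split <;> omega

lemma spread_Pk {n k : ℕ} (hk1 : 1 ≤ k) (hkn : k ≤ n) : spread (Pk n k) = n - k := by
  unfold spread
  have hmem : (⟨k - 1, by omega⟩ : Fin n) ∈
      Finset.univ.filter (fun i : Fin n => blockMin (Pk n k) i = (i : ℕ)) := by
    simp only [Finset.mem_filter, Finset.mem_univ, true_and]
    rw [blockMin_Pk hk1 hkn]
    show min (k-1) (k-1) = k - 1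
    omega
  rw [Finset.sum_eq_single_of_mem _ hmem]
  · rw [blockMax_Pk hk1 hkn]
    simp only [lt_self_iff_false, if_false]
    show n - 1 - (k - 1) = n - k
    omega
  · intro i hi hne
    simp only [Finset.mem_filter, Finset.mem_univ, true_and, blockMin_Pk hk1 hkn] at hi
    have hilt : (i : ℕ) < k - 1 := by
      have : (i : ℕ) ≠ k - 1 := fun hh => hne (Fin.ext hh)
      omega
    rw [blockMax_Pk hk1 hkn, if_pos hilt]
    omega

lemma blockNum_Pk {n k : ℕ} (hk1 : 1 ≤ k) (hkn : k ≤ n) : blockNum (Pk n k) = k := by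
  unfold blockNum
  have hcard : (Finset.univ.image (fun i : Fin n => Quotient.mk (Pk n k) i)).card
      = (Finset.univ.image (fun i : Fin n => min (i : ℕ) (k-1))).card := by
    have hlift : ∀ (x : Quotient (Pk n k)),
        ∃ i : Fin n, x = Quotient.mk (Pk n k) i := fun x => ⟨x.out, (Quotient.out_eq x).symm⟩
    let g : Quotient (Pk n k) → ℕ := Quotient.lift (fun i : Fin n => min (i : ℕ) (k-1))
      (fun a b h => h)
    have hginj : Function.Injective g := by
      intro x y hxy
      obtain ⟨a, rfl⟩ := hlift x
      obtain ⟨b, rfl⟩ := hlift y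
      exact Quotient.sound (show min (a:ℕ) (k-1) = min (b:ℕ) (k-1) from hxy)
    rw [← Finset.card_image_of_injective _ hginj, Finset.image_image]
    rfl
  rw [hcard]
  have : (Finset.univ.image (fun i : Fin n => min (i : ℕ) (k-1))) = Finset.range k := by
    ext m
    simp only [Finset.mem_image, Finset.mem_univ, true_and, Finset.mem_range]
    constructor
    · rintro ⟨i, hi⟩; omega
    · intro hm
      exact ⟨⟨m, by omega⟩, by show min m (k-1) = m; omega⟩
  rw [this, Finset.card_range]

lemma Pk_inj {n : ℕ} (hn : 1 ≤ n) : ∀ k, 1 ≤ k → k ≤ n → ∀ k', 1 ≤ k' → k' ≤ n →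
    Pk n k = Pk n k' → k = k' := by
  intro k hk1 hkn k' hk1' hkn' h
  have := congrArg (fun S : SetPartition n =>
    S.r ⟨min (k-1) (k'-1), by omega⟩ ⟨n-1, by omega⟩) h
  have hiff : (min (min (k-1) (k'-1)) (k-1) = min (n-1) (k-1)) ↔
      (min (min (k-1) (k'-1)) (k'-1) = min (n-1) (k'-1)) := iff_of_eq this
  omega

/-- the partitions of `[n]` avoiding both `13/2` and `12/3` are exactly
`1/2/…/(k−1)/{k,…,n}` for `1 ≤ k ≤ n` (here written 0-based: singletons `{0},…,{k-2}`
together with the interval `{k-1,…,n-1}`), and the joint generating function is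
`Σ_{k=1}^{n} q^{n-k} t^k`. -/
theorem avoid_13_2_and_12_3 (n : ℕ) (hn : 1 ≤ n) :
    (∀ P : SetPartition n,
      (SPAvoids P p13_2 ∧ SPAvoids P p12_3) ↔
        ∃ k : ℕ, 1 ≤ k ∧ k ≤ n ∧
          P = Setoid.ker (fun i : Fin n => min (i : ℕ) (k - 1))) ∧
    ∀ q t : ℚ, SB2 n p13_2 p12_3 q t = ∑ k ∈ Finset.Icc 1 n, q ^ (n - k) * t ^ k := by
  constructor
  · intro P
    constructor
    · rintro ⟨h1, h2⟩
      obtain ⟨k, hk1, hkn, hP⟩ := structure_of_avoids hn P h1 h2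
      exact ⟨k, hk1, hkn, hP⟩
    · rintro ⟨k, hk1, hkn, rfl⟩
      exact Pk_avoids n k
  · intro q t
    unfold SB2
    symm
    apply Finset.sum_bij (i := fun k (_ : k ∈ Finset.Icc 1 n) => Pk n k)
    · intro k _
      simp only [Finset.mem_filter, Finset.mem_univ, true_and]
      exact Pk_avoids n k
    · intro k1 hk1 k2 hk2 h
      simp only [Finset.mem_Icc] at hk1 hk2
      exact Pk_inj hn k1 hk1.1 hk1.2 k2 hk2.1 hk2.2 h
    · intro P hP
      simp only [Finset.mem_filter, Finset.mem_univ, true_and] at hP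
      obtain ⟨k, hk1, hkn, hPk⟩ := structure_of_avoids hn P hP.1 hP.2
      exact ⟨k, Finset.mem_Icc.mpr ⟨hk1, hkn⟩, hPk.symm⟩
    · intro k hk
      simp only [Finset.mem_Icc] at hk
      rw [spread_Pk hk.1 hk.2, blockNum_Pk hk.1 hk.2]

end
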